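/- Let L be an n×n real symmetric matrix with all eigenvalues in [0, λ_max] for some λ_max > 0, let L̃ = (2/λ_max) • L − 1, and let p be a real polynomial with |p(ξ)| ≤ 1 for all ξ ∈ [−1, 1]. Let φ : ℝⁿ → ℝⁿ be 1-Lipschitz (with respect to the Euclidean norm), and let α_hp, ε ∈ ℝ. Define F : ℝⁿ → ℝⁿ by F(x) = (1 + Real.tanh ε) • x − φ((Polynomial.aeval L̃ p) *ᵥ x + α_hp • (x − (1/λ_max) • (L *ᵥ x))). Then F is Lipschitz with constant (1 + Real.tanh ε) + 1 + |α_hp|, i.e. ‖F(x) − F(y)‖ ≤ ((1 + Real.tanh ε) + 1 + |α_hp|) · ‖x − y‖ for all x, y ∈ ℝⁿ, where ‖·‖ is the Euclidean norm. -/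

import Mathlib

open Matrix Polynomial

lemma myaux_dot {n : ℕ} (A : Matrix (Fin n) (Fin n) ℝ) (h : Aᵀ * A = 1) (a : Fin n → ℝ) :
    (A *ᵥ a) ⬝ᵥ (A *ᵥ a) = a ⬝ᵥ a := by
  rw [Matrix.dotProduct_mulVec, ← Matrix.mulVec_transpose, Matrix.mulVec_mulVec, h,
    Matrix.one_mulVec]

/-- conjugation by an orthogonal matrix as an algebra hom -/
noncomputable def myConjAH {n : ℕ} (U : Matrix (Fin n) (Fin n) ℝ) (h1 : Uᵀ * U = 1)
    (h2 : U * Uᵀ = 1) : Matrix (Fin n) (Fin n) ℝ →ₐ[ℝ] Matrix (Fin n) (Fin n) ℝ where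
  toFun M := U * M * Uᵀ
  map_one' := by show U * 1 * Uᵀ = 1; rw [mul_one, h2]
  map_mul' A B := by
    show U * (A * B) * Uᵀ = (U * A * Uᵀ) * (U * B * Uᵀ)
    have h : U * (A * B) * Uᵀ = (U * A) * (Uᵀ * U) * (B * Uᵀ) := by rw [h1]; noncomm_ring
    rw [h]; noncomm_ring
  map_zero' := by simp
  map_add' A B := by noncomm_ring
  commutes' r := by
    simp [Algebra.algebraMap_eq_smul_one, Matrix.mul_smul, Matrix.smul_mul, h2]

lemma myaux_aeval_conj {n : ℕ} (U : Matrix (Fin n) (Fin n) ℝ) (h1 : Uᵀ * U = 1)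
    (h2 : U * Uᵀ = 1) (d : Fin n → ℝ) (q : Polynomial ℝ) :
    aeval (U * Matrix.diagonal d * Uᵀ) q
      = U * Matrix.diagonal (fun i => q.eval (d i)) * Uᵀ := by
  have hd : U * Matrix.diagonal d * Uᵀ = myConjAH U h1 h2 (Matrix.diagonalAlgHom ℝ d) := rfl
  rw [hd, Polynomial.aeval_algHom_apply, Polynomial.aeval_algHom_apply]
  have : aeval d q = fun i => q.eval (d i) := by
    funext i
    have h := Polynomial.aeval_algHom_apply (Pi.evalAlgHom ℝ (fun _ => ℝ) i) d q
    simp only [Pi.evalAlgHom_apply] at h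
    rw [← h, Polynomial.coe_aeval_eq_eval]
  rw [this]; rfl

lemma myaux_norm {n : ℕ} (U : Matrix (Fin n) (Fin n) ℝ) (h1 : Uᵀ * U = 1) (h2 : U * Uᵀ = 1)
    (d : Fin n → ℝ) (c : ℝ) (hc : 0 ≤ c) (hd : ∀ i, |d i| ≤ c) (v : Fin n → ℝ) :
    ‖(WithLp.equiv 2 (Fin n → ℝ)).symm ((U * Matrix.diagonal d * Uᵀ) *ᵥ v)‖
      ≤ c * ‖(WithLp.equiv 2 (Fin n → ℝ)).symm v‖ := by
  have norm_eq : ∀ w : Fin n → ℝ,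
      ‖(WithLp.equiv 2 (Fin n → ℝ)).symm w‖ = Real.sqrt (w ⬝ᵥ w) := by
    intro w
    rw [EuclideanSpace.norm_eq]
    congr 1
    rw [dotProduct]
    refine Finset.sum_congr rfl fun i _ => ?_
    simp [WithLp.equiv_symm_apply, Real.norm_eq_abs, sq_abs, sq]
  rw [norm_eq, norm_eq,
    show c * Real.sqrt (v ⬝ᵥ v) = Real.sqrt (c ^ 2 * (v ⬝ᵥ v)) by
      rw [Real.sqrt_mul (sq_nonneg c), Real.sqrt_sq hc]]
  apply Real.sqrt_le_sqrt
  have e1 : (U * Matrix.diagonal d * Uᵀ) *ᵥ v = U *ᵥ (Matrix.diagonal d *ᵥ (Uᵀ *ᵥ v)) := by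
    simp [Matrix.mulVec_mulVec, Matrix.mul_assoc]
  rw [e1, myaux_dot U h1]
  have e2 : (Uᵀ *ᵥ v) ⬝ᵥ (Uᵀ *ᵥ v) = v ⬝ᵥ v :=
    myaux_dot Uᵀ (by rwa [Matrix.transpose_transpose]) v
  set w := Uᵀ *ᵥ v with hw
  calc (Matrix.diagonal d *ᵥ w) ⬝ᵥ (Matrix.diagonal d *ᵥ w)
      = ∑ i, (d i * w i) * (d i * w i) := by
        simp [dotProduct, Matrix.mulVec_diagonal]
    _ ≤ ∑ i, c ^ 2 * (w i * w i) := by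
        refine Finset.sum_le_sum fun i _ => ?_
        obtain ⟨ha, hb⟩ := abs_le.mp (hd i)
        have hsq : d i ^ 2 ≤ c ^ 2 := sq_le_sq' ha hb
        nlinarith [sq_nonneg (w i)]
    _ = c ^ 2 * (w ⬝ᵥ w) := by rw [dotProduct, Finset.mul_sum]
    _ = c ^ 2 * (v ⬝ᵥ v) := by rw [e2]

/-- **Global Lipschitz bound for the full PolyNSD layer.**
Let `L` be real symmetric with eigenvalues in `[0, λ_max]`, `L̃ = (2/λ_max) • L - 1`,
`p` a real polynomial with `|p(ξ)| ≤ 1` on `[-1, 1]`, `φ` a 1-Lipschitz nonlinearity, and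
`F(x) = (1 + tanh ε) • x - φ(p(L̃) x + α_hp • (x - λ_max⁻¹ L x))`. Then `F` is Lipschitz
with constant `(1 + tanh ε) + 1 + |α_hp|` in the Euclidean norm.
(Here `(WithLp.equiv 2 (Fin n → ℝ)).symm` is the identity reinterpreting a plain vector,
such as a matrix–vector product `M *ᵥ x`, as an element of Euclidean space.) -/
theorem polynsd_layer_lipschitz
    {n : ℕ} (L : Matrix (Fin n) (Fin n) ℝ) (hL : L.IsHermitian)
    (lmax : ℝ) (hlmax : 0 < lmax)
    (hspec : ∀ i, hL.eigenvalues i ∈ Set.Icc (0 : ℝ) lmax)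
    (p : Polynomial ℝ) (hp : ∀ ξ ∈ Set.Icc (-1 : ℝ) 1, |p.eval ξ| ≤ 1)
    (φ : EuclideanSpace ℝ (Fin n) → EuclideanSpace ℝ (Fin n))
    (hφ : ∀ x y : EuclideanSpace ℝ (Fin n), ‖φ x - φ y‖ ≤ ‖x - y‖)
    (αhp ε : ℝ)
    (F : EuclideanSpace ℝ (Fin n) → EuclideanSpace ℝ (Fin n))
    (hF : ∀ x : EuclideanSpace ℝ (Fin n),
      F x = (1 + Real.tanh ε) • x -
        φ ((WithLp.equiv 2 (Fin n → ℝ)).symm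
              ((Polynomial.aeval ((2 / lmax) • L - 1) p).mulVec x)
            + αhp • (x - (1 / lmax) •
                (WithLp.equiv 2 (Fin n → ℝ)).symm (L.mulVec x)))) :
    ∀ x y : EuclideanSpace ℝ (Fin n),
      ‖F x - F y‖ ≤ ((1 + Real.tanh ε) + 1 + |αhp|) * ‖x - y‖ := by
  intro x y
  set eqq := WithLp.equiv 2 (Fin n → ℝ) with heqq
  -- spectral data
  set U : Matrix (Fin n) (Fin n) ℝ := (hL.eigenvectorUnitary : Matrix (Fin n) (Fin n) ℝ) with hU
  set μ : Fin n → ℝ := hL.eigenvalues with hμ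
  have hstar : (star U : Matrix (Fin n) (Fin n) ℝ) = Uᵀ := by
    rw [Matrix.star_eq_conjTranspose, Matrix.conjTranspose_eq_transpose_of_trivial]
  have h1 : Uᵀ * U = 1 := by
    rw [← hstar]; exact (Unitary.mem_iff.mp hL.eigenvectorUnitary.2).1
  have h2 : U * Uᵀ = 1 := by
    rw [← hstar]; exact (Unitary.mem_iff.mp hL.eigenvectorUnitary.2).2
  have hrepL : L = U * Matrix.diagonal μ * Uᵀ := by
    have := hL.spectral_theorem
    rw [Unitary.conjStarAlgAut_apply, hstar] at this
    simpa [RCLike.ofReal_real_eq_id] using this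
  set c : Matrix (Fin n) (Fin n) ℝ →ₐ[ℝ] Matrix (Fin n) (Fin n) ℝ := myConjAH U h1 h2 with hc
  have hcd : ∀ d : Fin n → ℝ, c (Matrix.diagonal d) = U * Matrix.diagonal d * Uᵀ := fun _ => rfl
  -- representation of p(L̃)
  have hdiag1 : (2 / lmax) • Matrix.diagonal μ - (1 : Matrix (Fin n) (Fin n) ℝ)
      = Matrix.diagonal (fun i => 2 / lmax * μ i - 1) := by
    rw [← Matrix.diagonal_smul, ← Matrix.diagonal_one, ← Matrix.diagonal_sub]; rfl
  have hLt : (2 / lmax) • L - 1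
      = U * Matrix.diagonal (fun i => 2 / lmax * μ i - 1) * Uᵀ := by
    have h : (2 / lmax) • L - 1 = c ((2 / lmax) • Matrix.diagonal μ - 1) := by
      rw [map_sub, _root_.map_smul, _root_.map_one, hcd, ← hrepL]
    rw [h, hdiag1, hcd]
  have hM1 : Polynomial.aeval ((2 / lmax) • L - 1) p
      = U * Matrix.diagonal (fun i => p.eval (2 / lmax * μ i - 1)) * Uᵀ := by
    rw [hLt, myaux_aeval_conj U h1 h2]
  -- representation of 1 - (1/lmax) L
  have hdiag2 : (1 : Matrix (Fin n) (Fin n) ℝ) - (1 / lmax) • Matrix.diagonal μ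
      = Matrix.diagonal (fun i => 1 - 1 / lmax * μ i) := by
    rw [← Matrix.diagonal_smul, ← Matrix.diagonal_one, ← Matrix.diagonal_sub]; rfl
  have hM2 : (1 : Matrix (Fin n) (Fin n) ℝ) - (1 / lmax) • L
      = U * Matrix.diagonal (fun i => 1 - 1 / lmax * μ i) * Uᵀ := by
    have h : (1 : Matrix (Fin n) (Fin n) ℝ) - (1 / lmax) • L
        = c (1 - (1 / lmax) • Matrix.diagonal μ) := by
      rw [map_sub, _root_.map_smul, _root_.map_one, hcd, ← hrepL]
    rw [h, hdiag2, hcd]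
  -- eigenvalue bounds
  have hb1 : ∀ i, |p.eval (2 / lmax * μ i - 1)| ≤ 1 := by
    intro i
    obtain ⟨h0, hm⟩ := hspec i
    refine hp _ ⟨?_, ?_⟩
    · have : 0 ≤ 2 / lmax * μ i := by positivity
      linarith
    · have h2l : 2 / lmax * μ i ≤ 2 / lmax * lmax := by
        apply mul_le_mul_of_nonneg_left hm; positivity
      rw [div_mul_cancel₀] at h2l
      · linarith
      · exact hlmax.ne'
  have hb2 : ∀ i, |1 - 1 / lmax * μ i| ≤ 1 := by
    intro i
    obtain ⟨h0, hm⟩ := hspec i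
    rw [abs_le]
    constructor
    · have h2l : 1 / lmax * μ i ≤ 1 / lmax * lmax := by
        apply mul_le_mul_of_nonneg_left hm; positivity
      rw [div_mul_cancel₀] at h2l
      · linarith
      · exact hlmax.ne'
    · have : 0 ≤ 1 / lmax * μ i := by positivity
      linarith
  -- the vector z
  set z : Fin n → ℝ := eqq x - eqq y with hzdef
  have hsz : eqq.symm z = x - y := by
    rw [hzdef, heqq, WithLp.equiv_symm_apply, WithLp.toLp_sub]; simp
  -- norm bounds on the two matrix pieces
  have key1 : ‖eqq.symm ((Polynomial.aeval ((2 / lmax) • L - 1) p) *ᵥ z)‖ ≤ ‖x - y‖ := by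
    rw [hM1, ← hsz]
    simpa [heqq] using myaux_norm U h1 h2 _ 1 zero_le_one hb1 z
  have key2 : ‖eqq.symm ((1 - (1 / lmax) • L) *ᵥ z)‖ ≤ ‖x - y‖ := by
    rw [hM2, ← hsz]
    simpa [heqq] using myaux_norm U h1 h2 _ 1 zero_le_one hb2 z
  -- difference of the nonlinearity arguments
  set ax := eqq.symm ((Polynomial.aeval ((2 / lmax) • L - 1) p).mulVec x)
      + αhp • (x - (1 / lmax) • eqq.symm (L.mulVec x)) with hax
  set ay := eqq.symm ((Polynomial.aeval ((2 / lmax) • L - 1) p).mulVec y)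
      + αhp • (y - (1 / lmax) • eqq.symm (L.mulVec y)) with hay
  have hmv : ∀ (M : Matrix (Fin n) (Fin n) ℝ) (u : EuclideanSpace ℝ (Fin n)),
      M.mulVec u = M.mulVec (eqq u) := fun _ _ => rfl
  have hdiff : ax - ay = eqq.symm ((Polynomial.aeval ((2 / lmax) • L - 1) p) *ᵥ z)
      + αhp • eqq.symm ((1 - (1 / lmax) • L) *ᵥ z) := by
    rw [hax, hay, hmv _ x, hmv _ y, hmv L x, hmv L y]
    have hzsub : ∀ (M : Matrix (Fin n) (Fin n) ℝ),
        eqq.symm (M *ᵥ eqq x) - eqq.symm (M *ᵥ eqq y) = eqq.symm (M *ᵥ z) := by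
      intro M
      rw [hzdef, Matrix.mulVec_sub, heqq, WithLp.equiv_symm_apply, WithLp.toLp_sub]
    have h2v : eqq.symm ((1 - (1 / lmax) • L) *ᵥ z)
        = eqq.symm z - (1 / lmax) • eqq.symm (L *ᵥ z) := by
      rw [Matrix.sub_mulVec, Matrix.one_mulVec, Matrix.smul_mulVec,
        heqq, WithLp.equiv_symm_apply, WithLp.toLp_sub, WithLp.toLp_smul]
    rw [h2v, ← hzsub, ← hzsub L, hsz]
    module
  -- positivity of the gate
  have htanh : 0 ≤ 1 + Real.tanh ε := by
    rw [Real.tanh_eq_sinh_div_cosh]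
    have hcosh := Real.cosh_pos ε
    have h : 1 + Real.sinh ε / Real.cosh ε
        = (Real.cosh ε + Real.sinh ε) / Real.cosh ε := by field_simp
    rw [h, Real.cosh_add_sinh]
    positivity
  -- assemble
  rw [hF x, hF y, ← hax, ← hay]
  have hsplit : (1 + Real.tanh ε) • x - φ ax - ((1 + Real.tanh ε) • y - φ ay)
      = (1 + Real.tanh ε) • (x - y) - (φ ax - φ ay) := by
    rw [smul_sub]; abel
  rw [hsplit]
  calc ‖(1 + Real.tanh ε) • (x - y) - (φ ax - φ ay)‖
      ≤ ‖(1 + Real.tanh ε) • (x - y)‖ + ‖φ ax - φ ay‖ := norm_sub_le _ _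
    _ ≤ (1 + Real.tanh ε) * ‖x - y‖ + ‖ax - ay‖ := by
        gcongr
        · rw [norm_smul, Real.norm_eq_abs, abs_of_nonneg htanh]
        · exact hφ ax ay
    _ ≤ (1 + Real.tanh ε) * ‖x - y‖ + (‖x - y‖ + |αhp| * ‖x - y‖) := by
        gcongr
        rw [hdiff]
        calc ‖eqq.symm ((Polynomial.aeval ((2 / lmax) • L - 1) p) *ᵥ z)
              + αhp • eqq.symm ((1 - (1 / lmax) • L) *ᵥ z)‖
            ≤ ‖eqq.symm ((Polynomial.aeval ((2 / lmax) • L - 1) p) *ᵥ z)‖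
              + ‖αhp • eqq.symm ((1 - (1 / lmax) • L) *ᵥ z)‖ := norm_add_le _ _
          _ ≤ ‖x - y‖ + |αhp| * ‖x - y‖ := by
              rw [norm_smul, Real.norm_eq_abs]
              have h := abs_nonneg αhp
              gcongr
    _ = ((1 + Real.tanh ε) + 1 + |αhp|) * ‖x - y‖ := by ring
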